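/- Let S be a finite semigroup such that the ideal of S generated by the idempotents of S is a Clifford semigroup. Then all idempotents of S are central in S, and for every idempotent e ∈ S and every a ∈ S with ea = a, the subsemigroup ⟨a⟩ generated by a is a group (equivalently, a = a^m for some m ≥ 2). -/

import Mathlib

/-- Product of a nonempty list of semigroup elements: `a * l₁ * l₂ * ⋯`. -/
def sgProd {S : Type*} [Semigroup S] (a : S) (l : List S) : S :=
  l.foldl (· * ·) a

/-- `spow a m = a ^ m` for `m ≥ 1` (with junk value `a` at `m = 0`). -/
def spow {S : Type*} [Semigroup S] (a : S) : ℕ → S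
  | 0 => a
  | 1 => a
  | (n + 2) => spow a (n + 1) * a

/-- A (two-sided) ideal of a semigroup: a nonempty subset absorbing
multiplication on both sides. -/
def IsIdeal {S : Type*} [Semigroup S] (I : Set S) : Prop :=
  I.Nonempty ∧ ∀ s : S, ∀ x ∈ I, s * x ∈ I ∧ x * s ∈ I

/-- A subset of a semigroup that is a subsemigroup which is a group. -/
def IsGroupSubset {S : Type*} [Semigroup S] (G : Set S) : Prop :=
  (∀ x ∈ G, ∀ y ∈ G, x * y ∈ G) ∧
    ∃ e ∈ G, (∀ x ∈ G, e * x = x ∧ x * e = x) ∧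
      ∀ x ∈ G, ∃ y ∈ G, x * y = e ∧ y * x = e

/-- A subset of a semigroup that is a Clifford semigroup in its own right:
it is closed under multiplication, completely regular (every element lies in a
subsemigroup which is a group), and its idempotents are central in it. -/
def IsCliffordSubset {S : Type*} [Semigroup S] (C : Set S) : Prop :=
  (∀ x ∈ C, ∀ y ∈ C, x * y ∈ C) ∧
    (∀ x ∈ C, ∃ G ⊆ C, IsGroupSubset G ∧ x ∈ G) ∧
    (∀ e ∈ C, e * e = e → ∀ s ∈ C, e * s = s * e)

/-- A semigroup is a Clifford semigroup. -/
def IsCliffordSG (C : Type*) [Semigroup C] : Prop :=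
  IsCliffordSubset (Set.univ : Set C)

/-- A semigroup is nilpotent: for some `d`, any two products of at least `d`
elements are equal. -/
def IsNilpotentSG (N : Type*) [Semigroup N] : Prop :=
  ∃ d : ℕ, ∀ (a b : N) (l l' : List N),
    d ≤ l.length + 1 → d ≤ l'.length + 1 → sgProd a l = sgProd b l'

section Aux
variable {S : Type*} [Semigroup S]

lemma spow_succ' (a : S) : ∀ n, 1 ≤ n → spow a (n + 1) = a * spow a n := by
  intro n hn
  induction n with
  | zero => omega
  | succ m ih =>
    cases m with
    | zero => rfl
    | succ p =>
      have h := ih (by omega)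
      calc spow a (p + 3) = spow a (p + 2) * a := rfl
        _ = (a * spow a (p + 1)) * a := by rw [h]
        _ = a * (spow a (p + 1) * a) := mul_assoc _ _ _
        _ = a * spow a (p + 2) := rfl

end Aux


/-- If the ideal of a finite semigroup `S` generated by the
idempotents is a Clifford semigroup, then all idempotents of `S` are central,
and whenever `e` is idempotent and `e * a = a`, the subsemigroup generated by
`a` is a group (equivalently `a = a ^ m` for some `m ≥ 2`). -/
theorem stmt1 {S : Type*} [Semigroup S] [Finite S] [Nonempty S]
    (hI : IsCliffordSubset (⋂₀ {I : Set S | IsIdeal I ∧ {e : S | e * e = e} ⊆ I})) :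
    (∀ e s : S, e * e = e → e * s = s * e) ∧
    (∀ e a : S, e * e = e → e * a = a → ∃ m, 2 ≤ m ∧ a = spow a m) := by
  set J := ⋂₀ {I : Set S | IsIdeal I ∧ {e : S | e * e = e} ⊆ I} with hJdef
  have hmemE : ∀ e : S, e * e = e → e ∈ J := by
    intro e he
    exact Set.mem_sInter.mpr fun I hImem => hImem.2 he
  have hmul : ∀ e : S, e ∈ J → ∀ s : S, s * e ∈ J ∧ e * s ∈ J := by
    intro e heJ s
    constructor <;> refine Set.mem_sInter.mpr fun I hImem => ?_
    · exact (hImem.1.2 s e (Set.mem_sInter.mp heJ I hImem)).1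
    · exact (hImem.1.2 s e (Set.mem_sInter.mp heJ I hImem)).2
  obtain ⟨hclo, hreg, hcent⟩ := hI
  constructor
  · intro e s he
    have heJ := hmemE e he
    have h1 := hcent e heJ he (e * s) (hmul e heJ s).2
    have h2 := hcent e heJ he (s * e) (hmul e heJ s).1
    have k1 : e * s = e * s * e := by rw [← h1, ← mul_assoc, he]
    have k2 : e * s * e = s * e := by rw [mul_assoc, h2, mul_assoc, he]
    exact k1.trans k2
  · intro e a he hea
    have haJ : a ∈ J := by
      refine Set.mem_sInter.mpr fun I hImem => ?_
      have heI : e ∈ I := hImem.2 he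
      have := (hImem.1.2 a e heI).2
      rwa [hea] at this
    obtain ⟨G, hGJ, ⟨hGclose, f, hfG, hfid, hinv⟩, haG⟩ := hreg a haJ
    obtain ⟨y, hyG, hay, hya⟩ := hinv a haG
    have hpowG : ∀ n, spow a n ∈ G := by
      intro n
      induction n with
      | zero => exact haG
      | succ m ih =>
        cases m with
        | zero => exact haG
        | succ p =>
          show spow a (p + 1) * a ∈ G
          exact hGclose _ ih a haG
    have hred : ∀ n, 1 ≤ n → y * spow a (n + 1) = spow a n := by
      intro n hn
      rw [spow_succ' a n hn, ← mul_assoc, hya, (hfid _ (hpowG n)).1]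
    have claim : ∀ i, ∀ k, 1 ≤ k → spow a (i + 1) = spow a (k + i + 1) →
        a = spow a (k + 1) := by
      intro i
      induction i with
      | zero => intro k hk h; exact h
      | succ i ih =>
        intro k hk h
        have h' : y * spow a (i + 1 + 1) = y * spow a (k + (i + 1) + 1) := by rw [h]
        rw [hred (i + 1) (by omega)] at h'
        have : y * spow a ((k + i + 1) + 1) = spow a (k + i + 1) :=
          hred (k + i + 1) (by omega)
        rw [show k + (i + 1) + 1 = (k + i + 1) + 1 by omega] at h'
        rw [this] at h'
        exact ih k hk h'
    obtain ⟨i, j, hij, hfij⟩ :=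
      Finite.exists_ne_map_eq_of_infinite (fun n : ℕ => spow a (n + 1))
    have hfij : spow a (i + 1) = spow a (j + 1) := hfij
    rcases Nat.lt_or_ge i j with hlt | hge
    · refine ⟨j - i + 1, by omega, claim i (j - i) (by omega) ?_⟩
      rwa [show j - i + i + 1 = j + 1 by omega]
    · have hlt : j < i := by omega
      refine ⟨i - j + 1, by omega, claim j (i - j) (by omega) ?_⟩
      rw [show i - j + j + 1 = i + 1 by omega]
      exact hfij.symm
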